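/- For all integers k ≥ 1 and N ≥ 1 there exist positive real constants C_0, …, C_{k−1} and C'_0, …, C'_{N−1} such that for all real numbers a > 0 and b > 0 one has the identity a^{−k} = Σ_{l=0}^{k−1} C_l · (b−a)^N · b^{−(N+l)} · a^{−(k−l)} + Σ_{l=0}^{N−1} C'_l · (b−a)^l · b^{−(k+l)}. -/

import Mathlib

open Finset

private lemma aux_sum (n : ℕ) (u : ℝ) : ∀ m : ℕ,
    ∑ l ∈ range m, (Nat.choose (n + l) l : ℝ) * (1 - u) ^ l
      = u * ∑ l ∈ range m, (Nat.choose (n + 1 + l) l : ℝ) * (1 - u) ^ l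
        + (1 - u) ^ m * (Nat.choose (m + n) (n + 1) : ℝ) := by
  intro m
  induction m with
  | zero => simp [Nat.choose_eq_zero_of_lt]
  | succ m ih =>
    rw [sum_range_succ, sum_range_succ, ih, mul_add]
    have h1 : (Nat.choose (m + n) (n+1) : ℝ) + (Nat.choose (n+m) m : ℝ)
        = (Nat.choose (m+1+n) (n+1) : ℝ) := by
      have hs : Nat.choose (m+n) n = Nat.choose (n+m) m := by
        rw [add_comm m n]; exact Nat.choose_symm_add
      have hp : Nat.choose (m+n+1) (n+1) = Nat.choose (m+n) n + Nat.choose (m+n) (n+1) :=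
        Nat.choose_succ_succ (m+n) n
      have : m+1+n = m+n+1 := by omega
      rw [this]
      push_cast [hp, hs]
      ring
    have h2 : (Nat.choose (n+1+m) m : ℝ) = (Nat.choose (m+1+n) (n+1) : ℝ) := by
      have : m+1+n = (n+1)+m := by omega
      rw [this]
      exact_mod_cast (Nat.choose_symm_add (a := n+1) (b := m)).symm
    linear_combination (1-u)^m * h1 - u * (1-u)^m * h2

private lemma key_id (m : ℕ) (u : ℝ) : ∀ n : ℕ,
    (1 - u) ^ (m + 1) * ∑ l ∈ range (n + 1), (Nat.choose (m + l) l : ℝ) * u ^ l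
      + u ^ (n + 1) * ∑ l ∈ range (m + 1), (Nat.choose (n + l) l : ℝ) * (1 - u) ^ l = 1 := by
  intro n
  induction n with
  | zero =>
    simp only [Nat.add_zero, Nat.zero_add, Nat.choose_self, Nat.choose_zero_right]
    have G := geom_sum_mul (1 - u) (m + 1)
    simp only [Nat.choose_self, Nat.cast_one, one_mul, pow_one]
    rw [sum_range_one]
    simp only [Nat.choose_zero_right, Nat.cast_one, pow_zero, one_mul, mul_one]
    linear_combination -G
  | succ n ih =>
    have A := aux_sum n u (m + 1)
    rw [sum_range_succ (fun l => (Nat.choose (m + l) l : ℝ) * u ^ l) (n + 1)]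
    rw [show m + (n+1) = m+1+n from by omega]
    linear_combination ih - u^(n+1) * A

/-- The algebraic expansion identity (eq. A.3 of Appendix C): there are
    positive constants `C_0,…,C_{k-1}` and `C'_0,…,C'_{N-1}` such that for all
    `a, b > 0`,
    `a^{-k} = Σ_{l<k} C_l (b-a)^N b^{-(N+l)} a^{-(k-l)}
            + Σ_{l<N} C'_l (b-a)^l b^{-(k+l)}`. -/
theorem expansion_identity
    (k N : ℕ) (hk : 1 ≤ k) (hN : 1 ≤ N) :
    ∃ C : Fin k → ℝ, ∃ C' : Fin N → ℝ,
      (∀ l, 0 < C l) ∧ (∀ l, 0 < C' l) ∧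
      ∀ a b : ℝ, 0 < a → 0 < b →
        a ^ (-(k : ℤ)) =
          (∑ l : Fin k, C l * (b - a) ^ N * b ^ (-((N + (l : ℕ) : ℕ) : ℤ)) *
            a ^ (-((k - (l : ℕ) : ℕ) : ℤ))) +
          ∑ l : Fin N, C' l * (b - a) ^ (l : ℕ) * b ^ (-((k + (l : ℕ) : ℕ) : ℤ)) := by
  obtain ⟨m, rfl⟩ : ∃ m, k = m + 1 := ⟨k - 1, by omega⟩
  obtain ⟨n, rfl⟩ : ∃ n, N = n + 1 := ⟨N - 1, by omega⟩
  refine ⟨fun l => (Nat.choose (n + (l : ℕ)) (l : ℕ) : ℝ),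
    fun l => (Nat.choose (m + (l : ℕ)) (l : ℕ) : ℝ),
    fun l => by
      have : 0 < Nat.choose (n + (l : ℕ)) (l : ℕ) := Nat.choose_pos (Nat.le_add_left _ _)
      show (0:ℝ) < (Nat.choose (n + (l : ℕ)) (l : ℕ) : ℝ)
      exact_mod_cast this,
    fun l => by
      have : 0 < Nat.choose (m + (l : ℕ)) (l : ℕ) := Nat.choose_pos (Nat.le_add_left _ _)
      show (0:ℝ) < (Nat.choose (m + (l : ℕ)) (l : ℕ) : ℝ)
      exact_mod_cast this, ?_⟩
  intro a b ha hb
  have ha0 : a ≠ 0 := ha.ne'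
  have hb0 : b ≠ 0 := hb.ne'
  have hkey := key_id m ((b - a) / b) n
  have h1u : 1 - (b - a) / b = a / b := by field_simp; ring
  rw [h1u] at hkey
  rw [Fin.sum_univ_eq_sum_range
      (fun l => (Nat.choose (n + l) l : ℝ) * (b - a) ^ (n+1) * b ^ (-((n+1 + l : ℕ) : ℤ)) *
        a ^ (-((m+1 - l : ℕ) : ℤ))) (m+1),
    Fin.sum_univ_eq_sum_range
      (fun l => (Nat.choose (m + l) l : ℝ) * (b - a) ^ l * b ^ (-((m+1 + l : ℕ) : ℤ))) (n+1)]
  simp only [zpow_neg, zpow_natCast]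
  have e1 : (∑ l ∈ range (m+1), (Nat.choose (n + l) l : ℝ) * (b - a) ^ (n+1) *
        (b ^ (n+1 + l))⁻¹ * (a ^ (m+1 - l))⁻¹)
      = ((b - a) / b) ^ (n+1) * (∑ l ∈ range (m+1), (Nat.choose (n + l) l : ℝ) * (a / b) ^ l)
        * (a ^ (m+1))⁻¹ := by
    rw [Finset.mul_sum, Finset.sum_mul]
    refine Finset.sum_congr rfl fun l hl => ?_
    have hl' : l ≤ m + 1 := (mem_range.mp hl).le
    rw [pow_sub₀ a ha0 hl']
    simp only [div_pow]
    field_simp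
    ring
  have e2 : (∑ l ∈ range (n+1), (Nat.choose (m + l) l : ℝ) * (b - a) ^ l *
        (b ^ (m+1 + l))⁻¹)
      = (a / b) ^ (m+1) * (∑ l ∈ range (n+1), (Nat.choose (m + l) l : ℝ) * ((b - a) / b) ^ l)
        * (a ^ (m+1))⁻¹ := by
    rw [Finset.mul_sum, Finset.sum_mul]
    refine Finset.sum_congr rfl fun l hl => ?_
    simp only [div_pow]
    field_simp
    ring
  rw [add_comm] at hkey
  rw [e1, e2, ← add_mul, hkey, one_mul]
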